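/- Let F be a finite set of real numbers with F ⊆ (0,1] and let ε be a real number with ε > 0. Then the set of real numbers x such that x ≥ ε and x equals the product of some finite list of elements of F (the empty list having product 1) is finite. -/

import Mathlib

/-- Lists over a finite set with bounded length form a finite set. -/
lemma aux_finite_lists (G : Finset ℝ) : ∀ N : ℕ,
    {l : List ℝ | (∀ y ∈ l, y ∈ G) ∧ l.length ≤ N}.Finite
  | 0 => by
      apply Set.Finite.subset (Set.finite_singleton ([] : List ℝ))
      rintro l ⟨-, hl⟩
      simp [List.length_eq_zero_iff.mp (Nat.le_zero.mp hl)]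
  | (N + 1) => by
      have h := Set.Finite.image2 List.cons G.finite_toSet (aux_finite_lists G N)
      apply Set.Finite.subset (h.insert ([] : List ℝ))
      rintro l ⟨hmem, hlen⟩
      cases l with
      | nil => exact Set.mem_insert _ _
      | cons a t =>
          refine Set.mem_insert_of_mem _ (Set.mem_image2_of_mem ?_ ⟨?_, ?_⟩)
          · exact hmem a List.mem_cons_self
          · exact fun y hy => hmem y (List.mem_cons_of_mem _ hy)
          · simpa using Nat.succ_le_succ_iff.mp hlen

lemma aux_prod_le_pow (c : ℝ) (hc : 0 ≤ c) : ∀ l : List ℝ,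
    (∀ y ∈ l, 0 < y ∧ y ≤ c) → l.prod ≤ c ^ l.length
  | [], _ => by simp
  | a :: t, h => by
      have ha := h a List.mem_cons_self
      have ht := aux_prod_le_pow c hc t (fun y hy => h y (List.mem_cons_of_mem _ hy))
      have htpos : 0 < t.prod := List.prod_pos fun y hy => (h y (List.mem_cons_of_mem _ hy)).1
      calc (a :: t).prod = a * t.prod := List.prod_cons
        _ ≤ c * c ^ t.length := by
            apply mul_le_mul ha.2 ht htpos.le hc
        _ = c ^ (a :: t).length := by rw [List.length_cons, pow_succ']

lemma aux_filter_prod : ∀ l : List ℝ, (∀ y ∈ l, 0 < y ∧ y ≤ 1) →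
    (l.filter (fun y => decide (y < 1))).prod = l.prod
  | [], _ => by simp
  | a :: t, h => by
      have ha := h a List.mem_cons_self
      have ht := aux_filter_prod t (fun y hy => h y (List.mem_cons_of_mem _ hy))
      by_cases h1 : a < 1
      · rw [List.filter_cons_of_pos (by simpa using h1), List.prod_cons, ht, List.prod_cons]
      · have : a = 1 := le_antisymm ha.2 (not_lt.mp h1)
        rw [List.filter_cons_of_neg (by simpa using h1), ht, List.prod_cons, this, one_mul]

/-- Only finitely many products of finite lists of elements of a finite set
`F ⊆ (0,1]` lie above a positive threshold `ε`. -/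
theorem stmt_0 (F : Finset ℝ) (hF : ∀ x ∈ F, 0 < x ∧ x ≤ 1) (ε : ℝ) (hε : 0 < ε) :
    {x : ℝ | ε ≤ x ∧ ∃ l : List ℝ, (∀ y ∈ l, y ∈ F) ∧ x = l.prod}.Finite := by
  set G : Finset ℝ := F.filter (fun y => y < 1) with hG
  by_cases hGne : G.Nonempty
  · set c : ℝ := G.max' hGne with hc
    have hcG : c ∈ G := G.max'_mem hGne
    have hcF : c ∈ F := Finset.mem_filter.mp hcG |>.1
    have hc0 : 0 < c := (hF c hcF).1
    have hc1 : c < 1 := (Finset.mem_filter.mp hcG).2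
    obtain ⟨N, hN⟩ := exists_pow_lt_of_lt_one hε hc1
    apply Set.Finite.subset ((aux_finite_lists G N).image List.prod)
    rintro x ⟨hx, l, hlF, rfl⟩
    refine ⟨l.filter (fun y => decide (y < 1)), ⟨?_, ?_⟩, ?_⟩
    · intro y hy
      rw [List.mem_filter] at hy
      exact Finset.mem_filter.mpr ⟨hlF y hy.1, by simpa using hy.2⟩
    · -- length bound
      set l' := l.filter (fun y => decide (y < 1)) with hl'
      have hprod : l'.prod = l.prod := aux_filter_prod l (fun y hy => hF y (hlF y hy))
      have hmem' : ∀ y ∈ l', 0 < y ∧ y ≤ c := by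
        intro y hy
        rw [hl', List.mem_filter] at hy
        refine ⟨(hF y (hlF y hy.1)).1, ?_⟩
        have : y ∈ G := Finset.mem_filter.mpr ⟨hlF y hy.1, by simpa using hy.2⟩
        exact G.le_max' y this
      have hle : l'.prod ≤ c ^ l'.length := aux_prod_le_pow c hc0.le l' hmem'
      by_contra hlen
      push_neg at hlen
      have : c ^ l'.length ≤ c ^ N :=
        pow_le_pow_of_le_one hc0.le hc1.le (Nat.le_of_lt hlen)
      have : l.prod < ε := by
        calc l.prod = l'.prod := hprod.symm
          _ ≤ c ^ l'.length := hle
          _ ≤ c ^ N := this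
          _ < ε := hN
      linarith
    · exact aux_filter_prod l (fun y hy => hF y (hlF y hy))
  · -- all elements of F equal 1
    apply Set.Finite.subset (Set.finite_singleton (1 : ℝ))
    rintro x ⟨hx, l, hlF, rfl⟩
    have : ∀ y ∈ l, y = 1 := by
      intro y hy
      have hyF := hlF y hy
      by_contra h1
      have : y < 1 := lt_of_le_of_ne (hF y hyF).2 h1
      exact hGne ⟨y, Finset.mem_filter.mpr ⟨hyF, this⟩⟩
    simp [List.prod_eq_one this]
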